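/- Let Z/4 × Z/4 act on C² × C² coordinatewise, where Z/4 acts on C² by (z,w) ↦ (i·z, −w). Let V = {((0,w),(0,w)) : w ∈ C} and let Λ = {(γ,γ) : γ ∈ Z/4} be the diagonal subgroup. Then V is Λ-invariant, Ω = {γ ∈ Λ : γ|_V = id} has order 2, and the induced exact sequence 1 → Ω → Λ → Λ/Ω → 1, i.e. 1 → Z/2 → Z/4 → Z/2 → 1, does not split. -/

import Mathlib

/-- The `ℤ/4`-action on `ℂ²`: `k` acts by `(z,w) ↦ (i^k z, (-1)^k w)`. -/
def z4Act (k : ZMod 4) (p : ℂ × ℂ) : ℂ × ℂ :=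
  (Complex.I ^ k.val * p.1, (-1 : ℂ) ^ k.val * p.2)

/-- For the coordinatewise action of `ℤ/4 × ℤ/4` on `ℂ² × ℂ²`, the diagonal
`V = {((0,w),(0,w))}` is invariant under the diagonal subgroup `Λ = {(γ,γ)}`,
the subgroup `Ω = {γ ∈ Λ : γ|_V = id}` has order 2 (it is `{0,2} ⊂ ℤ/4`), and the
induced exact sequence `1 → Ω → Λ → Λ/Ω → 1`, i.e. `1 → ℤ/2 → ℤ/4 → ℤ/2 → 1`,
does not split. -/
theorem diagonal_of_nonsplit_suborbifold :
    (∀ (k : ZMod 4) (w : ℂ), ∃ w' : ℂ,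
      (z4Act k (0, w), z4Act k (0, w)) = (((0 : ℂ), w'), ((0 : ℂ), w'))) ∧
    ({k : ZMod 4 | ∀ w : ℂ, (z4Act k (0, w), z4Act k (0, w)) = ((0, w), (0, w))}
      = {0, 2}) ∧
    ¬ ∃ σ : ZMod 2 →+ ZMod 4,
      ∀ x : ZMod 2, (ZMod.castHom (by norm_num : (2 : ℕ) ∣ 4) (ZMod 2)) (σ x) = x := by
  refine ⟨?_, ?_, ?_⟩
  · intro k w
    exact ⟨(-1 : ℂ) ^ k.val * w, by simp [z4Act]⟩
  · ext k
    simp only [Set.mem_setOf_eq, Set.mem_insert_iff, Set.mem_singleton_iff, z4Act,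
      Prod.mk.injEq, mul_zero]
    constructor
    · intro h
      have h1 := (h 1).1.2
      simp only [mul_one] at h1
      fin_cases k
      · exact Or.inl rfl
      · exfalso; norm_num [ZMod.val, Fin.val] at h1
      · exact Or.inr rfl
      · exfalso; norm_num [ZMod.val, Fin.val] at h1
    · rintro (rfl | rfl) <;> intro w <;> (have h0 : (0 : ZMod 4).val = 0 := rfl; have h2 : (2 : ZMod 4).val = 2 := rfl; simp [h0, h2])
  · rintro ⟨σ, hσ⟩
    have h1 := hσ 1
    have h2 : σ 1 + σ 1 = 0 := by
      have e : (1 + 1 : ZMod 2) = 0 := rfl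
      rw [← map_add, e, map_zero]
    revert h1 h2
    generalize σ 1 = a
    revert a
    decide
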